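/- arXiv:2009.11494 — 2 statements merged into one kernel-verified Lean document; each statement's English description precedes it below -/
import Mathlib

section
/- Lemma 5.7: Let n ≥ 1, let B_n = {x^n ≈ x^{n+1}, x^n y ≈ y x^n, x²y ≈ xyx}, and let θ_X, θ_Y be fully invariant congruences on F = FreeMonoid ℕ with θ(B_n) ⊆ θ_X and θ(B_n) ⊆ θ_Y (the corresponding varieties X and Y are subvarieties of P_n). If (x^k y^ℓ, y^ℓ x^k) ∈ θ_X ⊔ θ_Y for some 1 ≤ k, ℓ < n (the meet X ∧ Y satisfies x^k y^ℓ ≈ y^ℓ x^k), then (x^k y^ℓ, y^ℓ x^k) ∈ θ_X or (x^k y^ℓ, y^ℓ x^k) ∈ θ_Y. -/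
/-! Common definitions: words, fully invariant congruences, identities and
named varieties from the paper. -/

/-- The free monoid over the countably infinite alphabet `ℕ`. -/
abbrev FM : Type := FreeMonoid ℕ

/-- The letters `x, y, z, s, t, h` (pairwise distinct elements of `ℕ`). -/
def xL : FM := FreeMonoid.of 0
def yL : FM := FreeMonoid.of 1
def zL : FM := FreeMonoid.of 2
def sL : FM := FreeMonoid.of 3
def tL : FM := FreeMonoid.of 4
def hL : FM := FreeMonoid.of 5
/-- The indexed letters `z_i` and `t_i` (0-based; pairwise distinct, and distinct
from the named letters above). -/
def zV (i : ℕ) : FM := FreeMonoid.of (10 + 2 * i)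
def tV (i : ℕ) : FM := FreeMonoid.of (11 + 2 * i)

/-- A congruence on the free monoid is fully invariant if it is stable under all
monoid endomorphisms. -/
def IsFullyInvariant (θ : Con FM) : Prop :=
  ∀ (σ : FM →* FM) (u v : FM), θ u v → θ (σ u) (σ v)

/-- The smallest fully invariant congruence on `FM` containing a set of identities. -/
def fiCon (E : Set (FM × FM)) : Con FM :=
  sInf {c : Con FM | IsFullyInvariant c ∧ ∀ p ∈ E, c p.1 p.2}

/-- Two congruences (relations) permute: `α ∘ β = β ∘ α`. -/
def Permute (α β : Con FM) : Prop :=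
  Relation.Comp (⇑α) (⇑β) = Relation.Comp (⇑β) (⇑α)

/-- A monoid `M` satisfies the identity `p.1 ≈ p.2`. -/
def MSatisfies (M : Type*) [Monoid M] (p : FM × FM) : Prop :=
  ∀ φ : FM →* M, φ p.1 = φ p.2

/-- A monoid `M` satisfies all identities of a congruence `θ`. -/
def SatisfiesAll (θ : Con FM) (M : Type*) [Monoid M] : Prop :=
  ∀ u v : FM, θ u v → MSatisfies M (u, v)

/-- Every element of the monoid `M` has a two-sided inverse, i.e. `M` is a group. -/
def IsGroupMonoid (M : Type*) [Monoid M] : Prop :=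
  ∀ m : M, ∃ m' : M, m * m' = 1 ∧ m' * m = 1

/-- The dual of a congruence: `θ^δ = {(rev u, rev v) : (u, v) ∈ θ}`. -/
def dualCon (θ : Con FM) : Con FM where
  r a b := θ a.reverse b.reverse
  iseqv := ⟨fun _ => θ.refl _, fun h => θ.symm h, fun h h' => θ.trans h h'⟩
  mul' := fun {a b c d} h₁ h₂ => by
    show θ (a * c).reverse (b * d).reverse
    rw [FreeMonoid.reverse_mul, FreeMonoid.reverse_mul]
    exact θ.mul h₂ h₁

/-- σ1 : `xysxty ≈ yxsxty`. -/
def idσ1 : FM × FM := (xL*yL*sL*xL*tL*yL, yL*xL*sL*xL*tL*yL)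
/-- σ2 : `xsytxy ≈ xsytyx`. -/
def idσ2 : FM × FM := (xL*sL*yL*tL*xL*yL, xL*sL*yL*tL*yL*xL)
/-- σ3 : `xsxyty ≈ xsyxty`. -/
def idσ3 : FM × FM := (xL*sL*xL*yL*tL*yL, xL*sL*yL*xL*tL*yL)
/-- α1 : `xysxtxhy ≈ yxsxtxhy`. -/
def idα1 : FM × FM := (xL*yL*sL*xL*tL*xL*hL*yL, yL*xL*sL*xL*tL*xL*hL*yL)
/-- α2 : `xysxtyhx ≈ yxsxtyhx`. -/
def idα2 : FM × FM := (xL*yL*sL*xL*tL*yL*hL*xL, yL*xL*sL*xL*tL*yL*hL*xL)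
/-- α3 : `xysytxhx ≈ yxsytxhx`. -/
def idα3 : FM × FM := (xL*yL*sL*yL*tL*xL*hL*xL, yL*xL*sL*yL*tL*xL*hL*xL)

/-- `aIdent i` is the identity `α_i` for `i ∈ {1, 2, 3}`. -/
def aIdent (i : ℕ) : FM × FM := if i = 1 then idα1 else if i = 2 then idα2 else idα3
/-- `bIdent i` is `β_i`, obtained from `α_i` by reversing both sides. -/
def bIdent (i : ℕ) : FM × FM := ((aIdent i).1.reverse, (aIdent i).2.reverse)

/-- The ordered product `f 0 * f 1 * ⋯ * f (n-1)`. -/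
def prodRange (n : ℕ) (f : ℕ → FM) : FM := ((List.range n).map f).prod
/-- The ordered product `f 0 * f 1 * ⋯ * f (n-1)` over `Fin n`. -/
def prodFin (n : ℕ) (f : Fin n → FM) : FM := ((List.finRange n).map f).prod

/-- The word `w_n[π,τ]` (0-based indices). -/
def wWord (n : ℕ) (π τ : Equiv.Perm (Fin n)) : FM :=
  prodRange n (fun i => zV i * tV i) * xL *
    prodFin n (fun i => zV (π i) * zV (n + τ i)) * xL *
    prodRange n (fun i => tV (n + i) * zV (n + i))

/-- The word `w_n'[π,τ]`. -/
def wWord' (n : ℕ) (π τ : Equiv.Perm (Fin n)) : FM :=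
  prodRange n (fun i => zV i * tV i) * (xL * xL) *
    prodFin n (fun i => zV (π i) * zV (n + τ i)) *
    prodRange n (fun i => tV (n + i) * zV (n + i))

/-- The word `c_{n,m}[ρ]`. -/
def cWord (n m : ℕ) (ρ : Equiv.Perm (Fin (n + m))) : FM :=
  prodRange n (fun i => zV i * tV i) * (xL * yL) * tL *
    prodRange m (fun i => zV (n + i) * tV (n + i)) * xL *
    prodFin (n + m) (fun i => zV (ρ i)) * yL

/-- The word `c'_{n,m}[ρ]`. -/
def cWord' (n m : ℕ) (ρ : Equiv.Perm (Fin (n + m))) : FM :=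
  prodRange n (fun i => zV i * tV i) * (yL * xL) * tL *
    prodRange m (fun i => zV (n + i) * tV (n + i)) * xL *
    prodFin (n + m) (fun i => zV (ρ i)) * yL

/-- The word `c_{n,m,k}[ρ]`. -/
def cWord3 (n m k : ℕ) (ρ : Equiv.Perm (Fin (n + m + k))) : FM :=
  prodRange n (fun i => zV i * tV i) * (xL * yL) * tL *
    prodRange m (fun i => zV (n + i) * tV (n + i)) * xL *
    prodFin (n + m + k) (fun i => zV (ρ i)) * yL *
    prodRange k (fun i => tV (n + m + i) * zV (n + m + i))

/-- The word `c'_{n,m,k}[ρ]`. -/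
def cWord3' (n m k : ℕ) (ρ : Equiv.Perm (Fin (n + m + k))) : FM :=
  prodRange n (fun i => zV i * tV i) * (yL * xL) * tL *
    prodRange m (fun i => zV (n + i) * tV (n + i)) * xL *
    prodFin (n + m + k) (fun i => zV (ρ i)) * yL *
    prodRange k (fun i => tV (n + m + i) * zV (n + m + i))

/-- The equational theory of `D_∞`. -/
def θDinf : Con FM :=
  fiCon {(xL^2, xL^3), (xL^2 * yL, yL * xL^2), idσ1, idσ2, idσ3}
/-- The equational theory of `N`. -/
def θN : Con FM :=
  fiCon {(xL^2, xL^3), (xL^2 * yL, yL * xL^2), (xL*yL*xL*zL*xL, xL^2*yL*zL), idσ2, idσ3}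
/-- The equational theory of `K`. -/
def θK : Con FM :=
  fiCon {(xL^2*yL, xL^2*yL*xL), (xL*yL*xL, xL*yL*xL^2), (xL^2*yL^2, yL^2*xL^2)}
/-- The identity basis of `P_n`. -/
def basisP (n : ℕ) : Set (FM × FM) :=
  {(xL^n, xL^(n+1)), (xL^n * yL, yL * xL^n), (xL^2*yL, xL*yL*xL)}
/-- The equational theory of `P_n`. -/
def θP (n : ℕ) : Con FM := fiCon (basisP n)
/-- The equational theory of `R`. -/
def θR : Con FM :=
  fiCon ({(xL^2, xL^3), (xL^2*yL, yL*xL^2), idσ1, idσ2} ∪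
    {p : FM × FM | ∃ (n : ℕ) (π τ : Equiv.Perm (Fin n)),
        1 ≤ n ∧ p = (wWord n π τ, wWord' n π τ)})
/-- The equational theory of `Q_{r,s}`. -/
def θQ (r s : ℕ) : Con FM :=
  fiCon ({(xL^2, xL^3), (xL^2*yL, yL*xL^2), idσ3} ∪
    {p : FM × FM | ∃ i : ℕ, (i = 1 ∨ i = 2 ∨ i = 3) ∧ i ≠ r ∧ p = aIdent i} ∪
    {p : FM × FM | ∃ j : ℕ, (j = 1 ∨ j = 2 ∨ j = 3) ∧ j ≠ s ∧ p = bIdent j} ∪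
    {p : FM × FM | ∃ (n m : ℕ) (ρ : Equiv.Perm (Fin (n + m))),
        p = (cWord n m ρ, cWord' n m ρ) ∨
        p = ((cWord n m ρ).reverse, (cWord' n m ρ).reverse)})
/-- The equational theory of the variety `SL` of semilattice monoids. -/
def θSL : Con FM := fiCon {(xL, xL^2), (xL*yL, yL*xL)}

/-- `u` is a factor (contiguous subword) of `w`. -/
def IsFactor (u w : FM) : Prop := ∃ p q : FM, p * u * q = w

lemma isFactor_left {a b w : FM} (h : IsFactor (a * b) w) : IsFactor a w := by
  obtain ⟨p, q, hpq⟩ := h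
  exact ⟨p, b * q, by rw [← hpq]; simp [mul_assoc]⟩

lemma isFactor_right {a b w : FM} (h : IsFactor (a * b) w) : IsFactor b w := by
  obtain ⟨p, q, hpq⟩ := h
  exact ⟨p * a, q, by rw [← hpq]; simp [mul_assoc]⟩

/-- The Rees congruence associated with the ideal of non-factors of `w`. -/
def reesCon (w : FM) : Con FM where
  r u v := u = v ∨ (¬ IsFactor u w ∧ ¬ IsFactor v w)
  iseqv := by
    refine ⟨fun _ => Or.inl rfl, ?_, ?_⟩
    · intro a b h
      rcases h with rfl | ⟨h1, h2⟩
      · exact Or.inl rfl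
      · exact Or.inr ⟨h2, h1⟩
    · intro a b c h h'
      rcases h with rfl | ⟨h1, h2⟩
      · exact h'
      · rcases h' with rfl | ⟨h3, h4⟩
        · exact Or.inr ⟨h1, h2⟩
        · exact Or.inr ⟨h1, h4⟩
  mul' := by
    rintro a b c d (rfl | ⟨h1, h2⟩) (rfl | ⟨h3, h4⟩)
    · exact Or.inl rfl
    · exact Or.inr ⟨fun h => h3 (isFactor_right h), fun h => h4 (isFactor_right h)⟩
    · exact Or.inr ⟨fun h => h1 (isFactor_left h), fun h => h2 (isFactor_left h)⟩
    · exact Or.inr ⟨fun h => h1 (isFactor_left h), fun h => h2 (isFactor_left h)⟩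

/-- The Rees quotient monoid `S(w)`. -/
abbrev SMon (w : FM) : Type := (reesCon w).Quotient

/-- The number of occurrences of the letter `a` in the word `w`. -/
def occ (w : FM) (a : ℕ) : ℕ := (FreeMonoid.toList w).count a

/-- A word in which every letter occurs at most once. -/
def LinearW (w : FM) : Prop := ∀ a : ℕ, occ w a ≤ 1

/-- Assemble the word `b0 * t_1 * b_1 * ⋯ * t_m * b_m` from a first block and a list
of (simple letter, block) pairs. -/
def assemble (b0 : FM) (rest : List (ℕ × FM)) : FM :=
  b0 * (rest.map (fun p => FreeMonoid.of p.1 * p.2)).prod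

/-- `(b0, rest)` is the decomposition of `w` into alternating simple letters and blocks
consisting of multiple letters. -/
def IsDecomposition (w : FM) (b0 : FM) (rest : List (ℕ × FM)) : Prop :=
  w = assemble b0 rest ∧
  (∀ p ∈ rest, occ w p.1 = 1) ∧
  (∀ a ∈ FreeMonoid.toList b0, 2 ≤ occ w a) ∧
  (∀ p ∈ rest, ∀ a ∈ FreeMonoid.toList p.2, 2 ≤ occ w a)

/-- The identity `u ≈ v` is linear-balanced. -/
def LinearBalanced (u v : FM) : Prop :=
  ∃ (b0 c0 : FM) (urest vrest : List (ℕ × FM)),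
    IsDecomposition u b0 urest ∧ IsDecomposition v c0 vrest ∧
    urest.map Prod.fst = vrest.map Prod.fst ∧
    ∀ a : ℕ, (2 ≤ occ u a ∨ 2 ≤ occ v a) →
      occ b0 a = occ c0 a ∧ occ b0 a ≤ 1 ∧
      ∀ q ∈ urest.zip vrest, occ q.1.2 a = occ q.2.2 a ∧ occ q.1.2 a ≤ 1

/-- `w` is an isoterm for `θ`. -/
def IsIsoterm (θ : Con FM) (w : FM) : Prop := ∀ w' : FM, θ w w' → w' = w

section L57aux
open FreeMonoid

/-! ### Auxiliary lemmas for Lemma 5.7 -/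

lemma occ_mul' (u v : FM) (a : ℕ) : occ (u * v) a = occ u a + occ v a := by
  simp [occ, FreeMonoid.toList_mul, List.count_append]

lemma occ_one' (a : ℕ) : occ 1 a = 0 := rfl

lemma occ_of' (a b : ℕ) : occ (FreeMonoid.of b) a = if b = a then 1 else 0 := by
  simp [occ, FreeMonoid.toList_of, List.count_cons]

lemma occ_pow' (b A a : ℕ) : occ ((FreeMonoid.of b : FM) ^ A) a = if b = a then A else 0 := by
  induction A with
  | zero => simp [occ_one']
  | succ A ih => rw [pow_succ, occ_mul', ih, occ_of']; split <;> simp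

def ford (w : FM) : Option ℕ := w.toList.find? (fun a => a == 0 || a == 1)

lemma ford_mul (u v : FM) : ford (u * v) = (ford u).or (ford v) := by
  simp [ford, FreeMonoid.toList_mul, List.find?_append]

lemma mem_of_occ_pos {w : FM} {a : ℕ} (h : 1 ≤ occ w a) : a ∈ w.toList := by
  rw [occ] at h; exact List.count_pos_iff.mp h

lemma not_mem_of_occ_zero {w : FM} {a : ℕ} (h : occ w a = 0) : a ∉ w.toList := by
  rw [occ] at h; exact List.count_eq_zero.mp h

lemma ford_none {w : FM} (h0 : occ w 0 = 0) (h1 : occ w 1 = 0) : ford w = none := by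
  rw [ford, List.find?_eq_none]
  intro x hx hp
  simp only [Bool.or_eq_true, beq_iff_eq] at hp
  rcases hp with rfl | rfl
  exacts [not_mem_of_occ_zero h0 hx, not_mem_of_occ_zero h1 hx]

lemma ford_some {w : FM} (h : 1 ≤ occ w 0 ∨ 1 ≤ occ w 1) :
    ford w = some 0 ∨ ford w = some 1 := by
  have hex : ∃ x ∈ w.toList, (x == 0 || x == 1) = true := by
    rcases h with h | h
    · exact ⟨0, mem_of_occ_pos h, by simp⟩
    · exact ⟨1, mem_of_occ_pos h, by simp⟩
  obtain ⟨m, hm⟩ := Option.isSome_iff_exists.mp (List.find?_isSome.mpr hex)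
  have hpm := List.find?_some hm
  simp only [Bool.or_eq_true, beq_iff_eq] at hpm
  rcases hpm with rfl | rfl
  · exact Or.inl hm
  · exact Or.inr hm

lemma ford_x {w : FM} (h0 : 1 ≤ occ w 0) (h1 : occ w 1 = 0) : ford w = some 0 := by
  rcases ford_some (Or.inl h0) with h | h
  · exact h
  · exact absurd (List.mem_of_find?_eq_some h) (not_mem_of_occ_zero h1)

lemma ford_y {w : FM} (h0 : occ w 0 = 0) (h1 : 1 ≤ occ w 1) : ford w = some 1 := by
  rcases ford_some (Or.inr h1) with h | h
  · exact absurd (List.mem_of_find?_eq_some h) (not_mem_of_occ_zero h0)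
  · exact h

lemma lift_single (t : ℕ) (c : FM) (w : FM) :
    (FreeMonoid.lift (fun a => if a = t then c else 1)) w = c ^ (occ w t) := by
  induction w using FreeMonoid.recOn with
  | one => simp [occ_one']
  | of_mul x w ihw =>
    rw [map_mul, ihw, FreeMonoid.lift_eval_of, occ_mul', occ_of']
    by_cases hx : x = t
    · subst hx; simp [pow_add, pow_succ, pow_succ']
    · simp [hx]

def projH : FM →* FM := FreeMonoid.lift (fun a => if a = 0 ∨ a = 1 then FreeMonoid.of a else 1)

lemma toList_projH (w : FM) :
    (projH w).toList = w.toList.filter (fun a => a == 0 || a == 1) := by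
  induction w using FreeMonoid.recOn with
  | one => rfl
  | of_mul x w ihw =>
    rw [map_mul, FreeMonoid.toList_mul, ihw, FreeMonoid.toList_of_mul]
    by_cases hx : x = 0 ∨ x = 1
    · have : projH (FreeMonoid.of x) = FreeMonoid.of x := by
        rw [projH, FreeMonoid.lift_eval_of, if_pos hx]
      rw [this, List.filter_cons, if_pos (by rcases hx with rfl | rfl <;> simp)]
      rfl
    · have : projH (FreeMonoid.of x) = 1 := by
        rw [projH, FreeMonoid.lift_eval_of, if_neg hx]
      rw [this, List.filter_cons, if_neg (by push_neg at hx; simp [hx])]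
      rfl

lemma occ_projH (w : FM) (t : ℕ) (ht : t = 0 ∨ t = 1) : occ (projH w) t = occ w t := by
  rw [occ, toList_projH, List.count_filter (by rcases ht with rfl | rfl <;> simp)]
  rfl

lemma find?_filter_self (p : ℕ → Bool) (L : List ℕ) :
    (L.filter p).find? p = L.find? p := by
  induction L with
  | nil => rfl
  | cons a L ih =>
    by_cases h : p a <;>
      simp [List.filter_cons, h, ih, List.find?_cons_of_pos, List.find?_cons_of_neg]

lemma ford_projH (w : FM) : ford (projH w) = ford w := by
  rw [ford, ford, toList_projH, find?_filter_self]

lemma mem_projH (w : FM) : ∀ a ∈ (projH w).toList, a = 0 ∨ a = 1 := by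
  rw [toList_projH]
  intro a ha
  have := List.of_mem_filter ha
  simpa using this

end L57aux

section L57theta
open FreeMonoid

lemma csymm {c : Con FM} {x y : FM} (h : c x y) : c y x := c.symm h
lemma ctrans {c : Con FM} {x y z : FM} (h : c x y) (h' : c y z) : c x z := c.trans h h'
lemma cmul {c : Con FM} {a b d e : FM} (h : c a b) (h' : c d e) : c (a * d) (b * e) := c.mul h h'


lemma fiCon_fullyInvariant (E : Set (FM × FM)) : IsFullyInvariant (fiCon E) := by
  intro σ u v h c hc
  exact hc.1 σ u v (h c hc)

lemma fiCon_rel {E : Set (FM × FM)} {p : FM × FM} (hp : p ∈ E) : fiCon E p.1 p.2 :=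
  fun c hc => hc.2 p hp

lemma thetaP_subst (n : ℕ) (f : ℕ → FM) {u v : FM} (h : θP n u v) :
    θP n ((FreeMonoid.lift f) u) ((FreeMonoid.lift f) v) :=
  fiCon_fullyInvariant _ _ u v h

lemma pgen1 (n : ℕ) : θP n (xL^n) (xL^(n+1)) :=
  fiCon_rel (p := (xL^n, xL^(n+1))) (by simp [basisP])

lemma pgen2 (n : ℕ) : θP n (xL^n * yL) (yL * xL^n) :=
  fiCon_rel (p := (xL^n * yL, yL * xL^n)) (by simp [basisP])

lemma pgen3 (n : ℕ) : θP n (xL^2 * yL) (xL * yL * xL) :=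
  fiCon_rel (p := (xL^2 * yL, xL * yL * xL)) (by simp [basisP])

lemma pcentral (n : ℕ) (w : FM) : θP n (xL^n * w) (w * xL^n) := by
  have h := thetaP_subst n (fun a => if a = 0 then xL else w) (pgen2 n)
  simpa [xL, yL, map_mul, map_pow] using h

lemma pcentralY (n : ℕ) (w : FM) : θP n (yL^n * w) (w * yL^n) := by
  have h := thetaP_subst n (fun a => if a = 0 then yL else w) (pgen2 n)
  simpa [xL, yL, map_mul, map_pow] using h

lemma pstep (n m : ℕ) (w : FM) : θP n (xL^(m+1) * w * xL) (xL^(m+2) * w) := by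
  have h := thetaP_subst n (fun a => if a = 0 then xL else xL^m * w) (pgen3 n)
  have e1 : (FreeMonoid.lift fun a => if a = 0 then xL else xL^m * w) (xL^2 * yL)
      = xL^(m+2) * w := by
    rw [map_mul, map_pow]
    show (if (0:ℕ) = 0 then xL else xL^m*w)^2 * (if (1:ℕ) = 0 then xL else xL^m*w) = _
    rw [if_pos rfl, if_neg one_ne_zero, ← mul_assoc, ← pow_add, Nat.add_comm 2 m]
  have e2 : (FreeMonoid.lift fun a => if a = 0 then xL else xL^m * w) (xL * yL * xL)
      = xL^(m+1) * w * xL := by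
    rw [map_mul, map_mul]
    show (if (0:ℕ) = 0 then xL else xL^m*w) * (if (1:ℕ) = 0 then xL else xL^m*w) *
        (if (0:ℕ) = 0 then xL else xL^m*w) = _
    rw [if_pos rfl, if_neg one_ne_zero, ← mul_assoc, ← pow_succ']
  rw [e1, e2] at h
  exact csymm h

lemma ystep (n m : ℕ) (w : FM) : θP n (yL^(m+1) * w * yL) (yL^(m+2) * w) := by
  have h := thetaP_subst n (fun a => if a = 0 then yL else yL^m * w) (pgen3 n)
  have e1 : (FreeMonoid.lift fun a => if a = 0 then yL else yL^m * w) (xL^2 * yL)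
      = yL^(m+2) * w := by
    rw [map_mul, map_pow, xL, yL, FreeMonoid.lift_eval_of, FreeMonoid.lift_eval_of]
    rw [if_pos rfl, if_neg one_ne_zero, ← mul_assoc, ← pow_add, Nat.add_comm 2 m]
  have e2 : (FreeMonoid.lift fun a => if a = 0 then yL else yL^m * w) (xL * yL * xL)
      = yL^(m+1) * w * yL := by
    rw [map_mul, map_mul, xL, yL, FreeMonoid.lift_eval_of, FreeMonoid.lift_eval_of]
    rw [if_pos rfl, if_neg one_ne_zero, ← mul_assoc, ← pow_succ']
  rw [e1, e2] at h
  exact csymm h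

lemma pcollapse (n j : ℕ) : θP n (xL^n) (xL^(n+j)) := by
  induction j with
  | zero => exact (θP n).refl _
  | succ j ih =>
    have h := cmul (pgen1 n) ((θP n).refl (xL^j))
    rw [← pow_add, ← pow_add, show n + 1 + j = n + (j+1) by omega] at h
    exact ctrans ih h

lemma pcollapseY (n j : ℕ) : θP n (yL^n) (yL^(n+j)) := by
  have h := thetaP_subst n (fun _ => yL) (pcollapse n j)
  simpa [xL, map_pow] using h

lemma pull_x (n B : ℕ) : ∀ A, θP n (xL * yL^B * xL^A) (xL^(A+1) * yL^B)
  | 0 => by simpa using (θP n).refl (xL * yL^B)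
  | (A+1) => by
    have ih := pull_x n B A
    have h1 := cmul ih ((θP n).refl xL)
    have e : xL * yL^B * xL^A * xL = xL * yL^B * xL^(A+1) := by
      rw [mul_assoc, ← pow_succ]
    rw [e] at h1
    exact ctrans h1 (pstep n A (yL^B))

lemma pull_y (n A : ℕ) : ∀ B, θP n (yL * xL^A * yL^B) (yL^(B+1) * xL^A)
  | 0 => by simpa using (θP n).refl (yL * xL^A)
  | (B+1) => by
    have ih := pull_y n A B
    have h1 := cmul ih ((θP n).refl yL)
    have e : yL * xL^A * yL^B * yL = yL * xL^A * yL^(B+1) := by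
      rw [mul_assoc, ← pow_succ]
    rw [e] at h1
    exact ctrans h1 (ystep n B (xL^A))

def nfW (w : FM) : FM :=
  if ford w = some 0 then xL^(occ w 0) * yL^(occ w 1) else yL^(occ w 1) * xL^(occ w 0)

lemma pnf (n : ℕ) : ∀ (w : FM), (∀ a ∈ w.toList, a = 0 ∨ a = 1) → θP n w (nfW w) := by
  intro w
  induction w using FreeMonoid.recOn with
  | one => intro _; simpa [nfW, ford, occ] using (θP n).refl (1 : FM)
  | of_mul x w ihw =>
    intro hmem
    have hx : x = 0 ∨ x = 1 := hmem x (by simp [FreeMonoid.toList_of_mul])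
    have hw : ∀ a ∈ w.toList, a = 0 ∨ a = 1 := fun a ha =>
      hmem a (by simp [FreeMonoid.toList_of_mul]; exact Or.inr ha)
    have h1 : θP n (FreeMonoid.of x * w) (FreeMonoid.of x * nfW w) :=
      cmul ((θP n).refl (FreeMonoid.of x)) (ihw hw)
    refine ctrans h1 ?_
    have hfo : ford (FreeMonoid.of x) = some x := by
      rcases hx with rfl | rfl <;> rfl
    have hfw : ford (FreeMonoid.of x * w) = some x := by
      rw [ford_mul, hfo]; rfl
    have ho0 : occ (FreeMonoid.of x * w) 0 = (if x = 0 then 1 else 0) + occ w 0 := by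
      rw [occ_mul', occ_of']
    have ho1 : occ (FreeMonoid.of x * w) 1 = (if x = 1 then 1 else 0) + occ w 1 := by
      rw [occ_mul', occ_of']
    rcases hx with rfl | rfl
    · -- x = 0
      have hnf : nfW (FreeMonoid.of 0 * w) = xL^(occ w 0 + 1) * yL^(occ w 1) := by
        rw [nfW, if_pos hfw, ho0, ho1]
        norm_num [Nat.add_comm]
      rw [hnf]
      by_cases hf : ford w = some 0
      · rw [nfW, if_pos hf]
        have e : FreeMonoid.of 0 * (xL^(occ w 0) * yL^(occ w 1))
            = xL^(occ w 0 + 1) * yL^(occ w 1) := by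
          rw [show (FreeMonoid.of 0 : FM) = xL from rfl, ← mul_assoc, ← pow_succ']
        rw [e]
        exact (θP n).refl _
      · rw [nfW, if_neg hf]
        have e : FreeMonoid.of 0 * (yL^(occ w 1) * xL^(occ w 0))
            = xL * yL^(occ w 1) * xL^(occ w 0) := by
          rw [show (FreeMonoid.of 0 : FM) = xL from rfl, mul_assoc]
        rw [e]
        exact pull_x n (occ w 1) (occ w 0)
    · -- x = 1
      have hnf : nfW (FreeMonoid.of 1 * w) = yL^(occ w 1 + 1) * xL^(occ w 0) := by
        rw [nfW, if_neg (by rw [hfw]; simp), ho0, ho1]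
        norm_num [Nat.add_comm]
      rw [hnf]
      by_cases hf : ford w = some 0
      · rw [nfW, if_pos hf]
        have e : FreeMonoid.of 1 * (xL^(occ w 0) * yL^(occ w 1))
            = yL * xL^(occ w 0) * yL^(occ w 1) := by
          rw [show (FreeMonoid.of 1 : FM) = yL from rfl, mul_assoc]
        rw [e]
        exact pull_y n (occ w 0) (occ w 1)
      · rw [nfW, if_neg hf]
        have e : FreeMonoid.of 1 * (yL^(occ w 1) * xL^(occ w 0))
            = yL^(occ w 1 + 1) * xL^(occ w 0) := by
          rw [show (FreeMonoid.of 1 : FM) = yL from rfl, ← mul_assoc, ← pow_succ']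
        rw [e]
        exact (θP n).refl _

end L57theta

section L57main
open FreeMonoid

lemma chainup {θ : Con FM} {A d : ℕ} (h : θ (xL^A) (xL^(A+d))) :
    ∀ m, θ (xL^A) (xL^(A + m*d))
  | 0 => by simpa using θ.refl (xL^A)
  | (m+1) => by
    have ih := chainup h m
    have h2 := cmul h (θ.refl (xL^(m*d)))
    rw [← pow_add, ← pow_add, show A + d + m*d = A + (m+1)*d by ring] at h2
    exact ctrans ih h2

lemma to_n {θ : Con FM} (n : ℕ) (hP : θP n ≤ θ) {A1 A2 : ℕ}
    (h : θ (xL^A1) (xL^A2)) (hlt : A1 < A2) : θ (xL^A1) (xL^n) := by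
  have h' : θ (xL^A1) (xL^(A1 + (A2 - A1))) := by
    rw [show A1 + (A2 - A1) = A2 by omega]; exact h
  have h2 := chainup h' n
  have hnd : n ≤ A1 + n * (A2 - A1) := by
    have : n * 1 ≤ n * (A2 - A1) := Nat.mul_le_mul_left n (by omega)
    omega
  have h3 : θP n (xL^n) (xL^(A1 + n*(A2 - A1))) := by
    have := pcollapse n (A1 + n*(A2 - A1) - n)
    rwa [show n + (A1 + n*(A2 - A1) - n) = A1 + n*(A2 - A1) by omega] at this
  exact ctrans h2 (csymm (hP h3))

lemma kcollapse {θ : Con FM} (n k : ℕ) (hP : θP n ≤ θ) {A : ℕ} (hA : A ≤ k)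
    (h : θ (xL^A) (xL^n)) : θ (xL^k) (xL^n) := by
  have h2 := cmul (θ.refl (xL^(k-A))) h
  rw [← pow_add, ← pow_add, show k - A + A = k by omega] at h2
  have h3 : θP n (xL^n) (xL^(k - A + n)) := by
    have := pcollapse n (k-A)
    rwa [show n + (k - A) = k - A + n by omega] at this
  exact ctrans h2 (csymm (hP h3))

lemma collapse {θ : Con FM} (n k l : ℕ) (hfi : IsFullyInvariant θ) (hP : θP n ≤ θ)
    {A1 A2 : ℕ} (h : θ (xL^A1) (xL^A2)) (hlt : A1 < A2) (hsm : A1 ≤ max k l) :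
    θ (xL^k * yL^l) (yL^l * xL^k) := by
  have hA : θ (xL^A1) (xL^n) := to_n n hP h hlt
  by_cases hk : A1 ≤ k
  · have hkk : θ (xL^k) (xL^n) := kcollapse n k hP hk hA
    have t1 : θ (xL^k * yL^l) (xL^n * yL^l) := cmul hkk (θ.refl _)
    have t2 : θ (xL^n * yL^l) (yL^l * xL^n) := hP (pcentral n (yL^l))
    have t3 : θ (yL^l * xL^n) (yL^l * xL^k) := cmul (θ.refl _) (csymm hkk)
    exact ctrans (ctrans t1 t2) t3
  · have hll : A1 ≤ l := by omega
    have hy : θ (yL^A1) (yL^n) := by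
      have := hfi (FreeMonoid.lift fun _ => yL) _ _ hA
      simpa [xL, map_pow] using this
    have hy2 : θ (yL^l) (yL^n) := by
      have h2 := cmul (θ.refl (yL^(l - A1))) hy
      rw [← pow_add, ← pow_add, show l - A1 + A1 = l by omega] at h2
      have h3 : θP n (yL^n) (yL^(l - A1 + n)) := by
        have := pcollapseY n (l - A1)
        rwa [show n + (l - A1) = l - A1 + n by omega] at this
      exact ctrans h2 (csymm (hP h3))
    have t1 : θ (xL^k * yL^l) (xL^k * yL^n) := cmul (θ.refl _) hy2
    have t2 : θ (xL^k * yL^n) (yL^n * xL^k) := csymm (hP (pcentralY n (xL^k)))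
    have t3 : θ (yL^n * xL^k) (yL^l * xL^k) := cmul (csymm hy2) (θ.refl _)
    exact ctrans (ctrans t1 t2) t3

lemma liftx {θ : Con FM} (n : ℕ) (hP : θP n ≤ θ) {A B : ℕ} (hA : 1 ≤ A)
    (h : θ (xL^A * yL^B) (yL^B * xL^A)) :
    ∀ j, θ (xL^(A+j) * yL^B) (yL^B * xL^(A+j))
  | 0 => h
  | (j+1) => by
    have ih := liftx n hP hA h j
    have c1 : θ (yL^B * xL^(A+(j+1))) (xL^(A+j) * yL^B * xL) := by
      have h2 := cmul (csymm ih) (θ.refl xL)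
      rwa [mul_assoc (yL^B), ← pow_succ, show A + j + 1 = A + (j+1) by omega] at h2
    have c2 : θP n (xL^(A+j) * yL^B * xL) (xL^(A+j+1) * yL^B) := by
      have := pstep n (A+j-1) (yL^B)
      rwa [show A+j-1+1 = A+j by omega, show A+j-1+2 = A+j+1 by omega] at this
    have c3 := ctrans c1 (hP c2)
    rw [show A+j+1 = A+(j+1) by omega] at c3
    exact csymm c3

lemma lifty {θ : Con FM} (n : ℕ) (hP : θP n ≤ θ) {A B : ℕ} (hB : 1 ≤ B)
    (h : θ (xL^A * yL^B) (yL^B * xL^A)) :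
    ∀ j, θ (xL^A * yL^(B+j)) (yL^(B+j) * xL^A)
  | 0 => h
  | (j+1) => by
    have ih := lifty n hP hB h j
    have c1 : θ (xL^A * yL^(B+(j+1))) (yL^(B+j) * xL^A * yL) := by
      have h2 := cmul ih (θ.refl yL)
      rwa [mul_assoc (xL^A), ← pow_succ, show B + j + 1 = B + (j+1) by omega] at h2
    have c2 : θP n (yL^(B+j) * xL^A * yL) (yL^(B+j+1) * xL^A) := by
      have := ystep n (B+j-1) (xL^A)
      rwa [show B+j-1+1 = B+j by omega, show B+j-1+2 = B+j+1 by omega] at this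
    have c3 := ctrans c1 (hP c2)
    rwa [show B+j+1 = B+(j+1) by omega] at c3

def InvT (k l : ℕ) (w : FM) : ℕ × ℕ × Option ℕ :=
  (min (occ w 0) (max k l + 1), min (occ w 1) (max k l + 1),
   if 1 ≤ occ w 0 ∧ occ w 0 ≤ k ∧ 1 ≤ occ w 1 ∧ occ w 1 ≤ l then ford w else none)

lemma inv_mul (k l : ℕ) {a b c d : FM}
    (h1 : InvT k l a = InvT k l b) (h2 : InvT k l c = InvT k l d) :
    InvT k l (a * c) = InvT k l (b * d) := by
  simp only [InvT, Prod.mk.injEq] at h1 h2 ⊢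
  obtain ⟨e1, e2, e3⟩ := h1
  obtain ⟨f1, f2, f3⟩ := h2
  refine ⟨by rw [occ_mul', occ_mul']; omega, by rw [occ_mul', occ_mul']; omega, ?_⟩
  rw [occ_mul', occ_mul', occ_mul', occ_mul']
  by_cases hc : 1 ≤ occ a 0 + occ c 0 ∧ occ a 0 + occ c 0 ≤ k ∧
      1 ≤ occ a 1 + occ c 1 ∧ occ a 1 + occ c 1 ≤ l
  · obtain ⟨hA, hB, hC, hD⟩ := hc
    have hA1 : occ b 0 = occ a 0 := by omega
    have hA2 : occ d 0 = occ c 0 := by omega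
    have hB1 : occ b 1 = occ a 1 := by omega
    have hB2 : occ d 1 = occ c 1 := by omega
    have hcbd : 1 ≤ occ b 0 + occ d 0 ∧ occ b 0 + occ d 0 ≤ k ∧
        1 ≤ occ b 1 + occ d 1 ∧ occ b 1 + occ d 1 ≤ l := by omega
    rw [if_pos ⟨hA, hB, hC, hD⟩, if_pos hcbd]
    rw [ford_mul, ford_mul]
    rcases Nat.eq_zero_or_pos (occ a 0) with h0 | h0 <;>
      rcases Nat.eq_zero_or_pos (occ a 1) with h1' | h1'
    · have hfa : ford a = none := ford_none h0 h1'
      have hfb : ford b = none := ford_none (by omega) (by omega)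
      have hcc : 1 ≤ occ c 0 ∧ occ c 0 ≤ k ∧ 1 ≤ occ c 1 ∧ occ c 1 ≤ l := by omega
      have hcd : 1 ≤ occ d 0 ∧ occ d 0 ≤ k ∧ 1 ≤ occ d 1 ∧ occ d 1 ≤ l := by omega
      rw [if_pos hcc, if_pos hcd] at f3
      rw [hfa, hfb, f3]
    · have hfa : ford a = some 1 := ford_y h0 h1'
      have hfb : ford b = some 1 := ford_y (by omega) (by omega)
      rw [hfa, hfb]
      rfl
    · have hfa : ford a = some 0 := ford_x h0 h1'
      have hfb : ford b = some 0 := ford_x (by omega) (by omega)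
      rw [hfa, hfb]
      rfl
    · have hca : 1 ≤ occ a 0 ∧ occ a 0 ≤ k ∧ 1 ≤ occ a 1 ∧ occ a 1 ≤ l := by omega
      have hcb : 1 ≤ occ b 0 ∧ occ b 0 ≤ k ∧ 1 ≤ occ b 1 ∧ occ b 1 ≤ l := by omega
      rw [if_pos hca, if_pos hcb] at e3
      rcases ford_some (w := a) (Or.inl h0) with hfa | hfa <;>
        · rw [hfa] at e3
          rw [hfa, ← e3]
          rfl
  · have hcbd : ¬ (1 ≤ occ b 0 + occ d 0 ∧ occ b 0 + occ d 0 ≤ k ∧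
        1 ≤ occ b 1 + occ d 1 ∧ occ b 1 + occ d 1 ≤ l) := by
      intro hcon
      obtain ⟨p1, p2, p3, p4⟩ := hcon
      exact hc ⟨by omega, by omega, by omega, by omega⟩
    rw [if_neg hc, if_neg hcbd]

def invCon (k l : ℕ) : Con FM where
  r u v := InvT k l u = InvT k l v
  iseqv := ⟨fun _ => rfl, Eq.symm, Eq.trans⟩
  mul' := fun h1 h2 => inv_mul k l h1 h2

lemma key (n k l : ℕ) {θ : Con FM} (hfi : IsFullyInvariant θ) (hP : θP n ≤ θ)
    (hnc : ¬ θ (xL^k * yL^l) (yL^l * xL^k)) :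
    ∀ u v : FM, θ u v → InvT k l u = InvT k l v := by
  intro u v huv
  by_contra hne
  apply hnc
  have hx : θ (xL ^ occ u 0) (xL ^ occ v 0) := by
    have := hfi (FreeMonoid.lift fun a => if a = 0 then xL else 1) u v huv
    rwa [lift_single, lift_single] at this
  have hy : θ (xL ^ occ u 1) (xL ^ occ v 1) := by
    have := hfi (FreeMonoid.lift fun a => if a = 1 then xL else 1) u v huv
    rwa [lift_single, lift_single] at this
  have derive : ∀ {A1 A2 : ℕ}, θ (xL^A1) (xL^A2) →
      ¬ (min A1 (max k l + 1) = min A2 (max k l + 1)) →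
      θ (xL^k * yL^l) (yL^l * xL^k) := by
    intro A1 A2 hA hne2
    rcases Nat.lt_or_ge A1 A2 with hlt | hge
    · exact collapse n k l hfi hP hA hlt (by omega)
    · have hlt2 : A2 < A1 := by omega
      exact collapse n k l hfi hP (csymm hA) hlt2 (by omega)
  by_cases c1 : min (occ u 0) (max k l + 1) = min (occ v 0) (max k l + 1)
  swap
  · exact derive hx c1
  by_cases c2 : min (occ u 1) (max k l + 1) = min (occ v 1) (max k l + 1)
  swap
  · exact derive hy c2
  have hcond : 1 ≤ occ u 0 ∧ occ u 0 ≤ k ∧ 1 ≤ occ u 1 ∧ occ u 1 ≤ l := by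
    by_contra hcu
    apply hne
    simp only [InvT, Prod.mk.injEq]
    refine ⟨c1, c2, ?_⟩
    rw [if_neg hcu, if_neg ?_]
    intro hcv
    obtain ⟨p1, p2, p3, p4⟩ := hcv
    exact hcu ⟨by omega, by omega, by omega, by omega⟩
  obtain ⟨hu1, hu2, hu3, hu4⟩ := hcond
  have hv1 : occ v 0 = occ u 0 := by omega
  have hv2 : occ v 1 = occ u 1 := by omega
  have hford : ford u ≠ ford v := by
    intro hf
    apply hne
    simp only [InvT, Prod.mk.injEq]
    refine ⟨c1, c2, ?_⟩
    rw [if_pos ⟨hu1, hu2, hu3, hu4⟩, if_pos (by omega), hf]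
  have huv' : θ (projH u) (projH v) := hfi projH u v huv
  have hAB : θ (nfW (projH u)) (nfW (projH v)) :=
    ctrans (ctrans (csymm (hP (pnf n (projH u) (mem_projH u)))) huv')
      (hP (pnf n (projH v) (mem_projH v)))
  have hou0 : occ (projH u) 0 = occ u 0 := occ_projH u 0 (Or.inl rfl)
  have hou1 : occ (projH u) 1 = occ u 1 := occ_projH u 1 (Or.inr rfl)
  have hov0 : occ (projH v) 0 = occ v 0 := occ_projH v 0 (Or.inl rfl)
  have hov1 : occ (projH v) 1 = occ v 1 := occ_projH v 1 (Or.inr rfl)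
  have finish : ∀ {A B : ℕ}, 1 ≤ A → A ≤ k → 1 ≤ B → B ≤ l →
      θ (xL^A * yL^B) (yL^B * xL^A) → θ (xL^k * yL^l) (yL^l * xL^k) := by
    intro A B hA hAk hB hBl hAB'
    have l1 := liftx n hP hA hAB' (k - A)
    rw [show A + (k - A) = k by omega] at l1
    have l2 := lifty n hP hB l1 (l - B)
    rwa [show B + (l - B) = l by omega] at l2
  rcases ford_some (w := u) (Or.inl hu1) with hf0 | hf0 <;>
    rcases ford_some (w := v) (Or.inl (by omega)) with hg0 | hg0
  · exact absurd (hf0.trans hg0.symm) hford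
  · have e1 : nfW (projH u) = xL^(occ u 0) * yL^(occ u 1) := by
      rw [nfW, if_pos (by rw [ford_projH]; exact hf0), hou0, hou1]
    have e2 : nfW (projH v) = yL^(occ u 1) * xL^(occ u 0) := by
      rw [nfW, if_neg (by rw [ford_projH, hg0]; simp), hov0, hov1, hv1, hv2]
    rw [e1, e2] at hAB
    exact finish hu1 hu2 hu3 hu4 hAB
  · have e1 : nfW (projH u) = yL^(occ u 1) * xL^(occ u 0) := by
      rw [nfW, if_neg (by rw [ford_projH, hf0]; simp), hou0, hou1]
    have e2 : nfW (projH v) = xL^(occ u 0) * yL^(occ u 1) := by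
      rw [nfW, if_pos (by rw [ford_projH]; exact hg0), hov0, hov1, hv1, hv2]
    rw [e1, e2] at hAB
    exact finish hu1 hu2 hu3 hu4 (csymm hAB)
  · exact absurd (hf0.trans hg0.symm) hford

end L57main

/-- **Lemma 5.7.** If two subvarieties of `P_n` are such that their meet satisfies
`x^k y^ℓ ≈ y^ℓ x^k` with `1 ≤ k, ℓ < n`, then this identity holds in one of them. -/
theorem lemma_5_7 (n : ℕ) (hn : 1 ≤ n) (θX θY : Con FM)
    (hfiX : IsFullyInvariant θX) (hfiY : IsFullyInvariant θY)
    (hPX : θP n ≤ θX) (hPY : θP n ≤ θY)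
    (k l : ℕ) (hk : 1 ≤ k) (hkn : k < n) (hl : 1 ≤ l) (hln : l < n)
    (h : (θX ⊔ θY) (xL ^ k * yL ^ l) (yL ^ l * xL ^ k)) :
    θX (xL ^ k * yL ^ l) (yL ^ l * xL ^ k) ∨
      θY (xL ^ k * yL ^ l) (yL ^ l * xL ^ k) := by
  by_contra hcon
  push_neg at hcon
  obtain ⟨hX, hY⟩ := hcon
  have hXle : θX ≤ invCon k l :=
    Con.le_def.mpr fun {a b} hab => key n k l hfiX hPX hX a b hab
  have hYle : θY ≤ invCon k l :=
    Con.le_def.mpr fun {a b} hab => key n k l hfiY hPY hY a b hab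
  have hpq : invCon k l (xL ^ k * yL ^ l) (yL ^ l * xL ^ k) := (sup_le hXle hYle) h
  have hI : InvT k l (xL ^ k * yL ^ l) = InvT k l (yL ^ l * xL ^ k) := hpq
  have ho1 : occ (xL ^ k * yL ^ l) 0 = k := by
    rw [occ_mul', xL, yL, occ_pow', occ_pow']; simp
  have ho2 : occ (xL ^ k * yL ^ l) 1 = l := by
    rw [occ_mul', xL, yL, occ_pow', occ_pow']; simp
  have ho3 : occ (yL ^ l * xL ^ k) 0 = k := by
    rw [occ_mul', xL, yL, occ_pow', occ_pow']; simp
  have ho4 : occ (yL ^ l * xL ^ k) 1 = l := by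
    rw [occ_mul', xL, yL, occ_pow', occ_pow']; simp
  have hx1 : ford (xL^k : FM) = some 0 :=
    ford_x (by rw [xL, occ_pow']; simpa using hk) (by rw [xL, occ_pow']; simp)
  have hy1 : ford (yL^l : FM) = some 1 :=
    ford_y (by rw [yL, occ_pow']; simp) (by rw [yL, occ_pow']; simpa using hl)
  have hfp : ford (xL ^ k * yL ^ l) = some 0 := by rw [ford_mul, hx1]; rfl
  have hfq : ford (yL ^ l * xL ^ k) = some 1 := by rw [ford_mul, hy1]; rfl
  simp only [InvT, Prod.mk.injEq, ho1, ho2, ho3, ho4, hfp, hfq] at hI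
  obtain ⟨-, -, h3⟩ := hI
  rw [if_pos ⟨hk, le_refl k, hl, le_refl l⟩, if_pos ⟨hk, le_refl k, hl, le_refl l⟩] at h3
  exact absurd h3 (by simp)
end

section
/- Lemma 7.1: Let θ be a fully invariant congruence on F = FreeMonoid ℕ such that α∘β∘α = β∘α∘β for every two fully invariant congruences α, β on F containing θ (the corresponding monoid variety V is weakly fi-permutable). Then either (x, x^{n+1}) ∈ θ for some n ≥ 1 (V is completely regular) or (x^n, x^{n+1}) ∈ θ for some n ≥ 1 (V is aperiodic). -/
/-! Auxiliary definitions for the proof. -/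


/-- The three element monoid `{1, c, c² = c³}`. -/
def M3 : Type := Fin 3

instance : Monoid M3 where
  mul a b := ⟨min (a.val + b.val) 2, by omega⟩
  one := ⟨0, by omega⟩
  mul_assoc a b c := by
    apply Fin.ext
    show min (min (a.val + b.val) 2 + c.val) 2 = min (a.val + min (b.val + c.val) 2) 2
    omega
  one_mul a := by
    apply Fin.ext
    show min (0 + a.val) 2 = a.val
    have := a.isLt; omega
  mul_one a := by
    apply Fin.ext
    show min (a.val + 0) 2 = a.val
    have := a.isLt; omega

def cM3 : M3 := ⟨1, by omega⟩

lemma cM3_pow (k : ℕ) : cM3 ^ k = ⟨min k 2, by omega⟩ := by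
  induction k with
  | zero => rfl
  | succ n ih =>
    rw [pow_succ, ih]
    apply Fin.ext
    show min (min n 2 + 1) 2 = min (n + 1) 2
    omega

lemma M3_rep (z : M3) : z = cM3 ^ z.val := by
  rw [cM3_pow]
  apply Fin.ext
  have := z.isLt
  show z.val = min z.val 2
  omega

/-- Theory congruence of a monoid `M` on `FM`. -/
def ThCon (M : Type) [Monoid M] : Con FM where
  r u v := ∀ φ : FM →* M, φ u = φ v
  iseqv := ⟨fun _ _ => rfl, fun h φ => (h φ).symm, fun h h' φ => (h φ).trans (h' φ)⟩
  mul' := fun h1 h2 φ => by rw [map_mul, map_mul, h1 φ, h2 φ]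

lemma ThCon_fi (M : Type) [Monoid M] : IsFullyInvariant (ThCon M) :=
  fun σ _ _ h φ => h (φ.comp σ)

lemma lift_pow {M : Type} [Monoid M] (c : M) (e : ℕ → ℕ) (u : FM) :
    FreeMonoid.lift (fun a => c ^ e a) u = c ^ ((FreeMonoid.toList u).map e).sum := by
  induction u using FreeMonoid.recOn with
  | one => simp
  | of_mul x xs ih =>
    rw [map_mul, FreeMonoid.lift_eval_of, ih, FreeMonoid.toList_of_mul,
      List.map_cons, List.sum_cons, pow_add]

lemma eval_pow {M : Type} [Monoid M] (c : M) (e : ℕ → ℕ) (φ : FM →* M)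
    (h : ∀ a, φ (FreeMonoid.of a) = c ^ e a) (u : FM) :
    φ u = c ^ ((FreeMonoid.toList u).map e).sum := by
  have hφ : φ = FreeMonoid.lift (fun a => c ^ e a) := by
    apply FreeMonoid.hom_eq
    intro a; rw [h a, FreeMonoid.lift_eval_of]
  rw [hφ, lift_pow]

lemma g1_pow (m k : ℕ) :
    (Multiplicative.ofAdd (1 : ZMod m)) ^ k = Multiplicative.ofAdd ((k : ZMod m)) := by
  rw [← ofAdd_nsmul, nsmul_eq_mul, mul_one]

lemma zmod_rep (m : ℕ) [NeZero m] (z : Multiplicative (ZMod m)) :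
    z = (Multiplicative.ofAdd (1 : ZMod m)) ^ (Multiplicative.toAdd z).val := by
  rw [g1_pow, ZMod.natCast_rightInverse _]
  rfl

lemma zmod_pow_exp (m : ℕ) (z : Multiplicative (ZMod m)) : z ^ m = 1 := by
  have : z = Multiplicative.ofAdd (Multiplicative.toAdd z) := rfl
  rw [this, ← ofAdd_nsmul, nsmul_eq_mul, ZMod.natCast_self, zero_mul]
  rfl


/-- **Lemma 7.1.** If a monoid variety with theory `θ` is weakly fi-permutable,
then it is either completely regular or aperiodic. -/
theorem weakly_fi_permutable_cr_or_aperiodic (θ : Con FM) (hθ : IsFullyInvariant θ)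
    (hweak : ∀ α β : Con FM, IsFullyInvariant α → IsFullyInvariant β →
        θ ≤ α → θ ≤ β →
        Relation.Comp (⇑α) (Relation.Comp (⇑β) (⇑α)) =
          Relation.Comp (⇑β) (Relation.Comp (⇑α) (⇑β))) :
    (∃ n : ℕ, 1 ≤ n ∧ θ xL (xL ^ (n + 1))) ∨
      (∃ n : ℕ, 1 ≤ n ∧ θ (xL ^ n) (xL ^ (n + 1))) := by

  classical
  by_contra hgoal
  push_neg at hgoal
  obtain ⟨hCR, hAP⟩ := hgoal
  -- basic manipulation: multiply a power identity by a further power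
  have hmul : ∀ i j k : ℕ, θ (xL ^ i) (xL ^ j) → θ (xL ^ (i + k)) (xL ^ (j + k)) := by
    intro i j k h
    have := θ.mul h (θ.refl (xL ^ k))
    rwa [← pow_add, ← pow_add] at this
  -- any nontrivial power identity has both exponents ≥ 2
  have hlow : ∀ i d : ℕ, 0 < d → θ (xL ^ i) (xL ^ (i + d)) → 2 ≤ i := by
    intro i d hd h
    by_contra hi
    rcases (by omega : i = 0 ∨ i = 1) with rfl | rfl
    · have h1 := hmul 0 (0 + d) 1 h
      rw [zero_add, pow_one] at h1
      rw [show 0 + d + 1 = d + 1 by omega] at h1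
      exact hCR d hd h1
    · rw [pow_one] at h
      exact hCR d hd (by rwa [show 1 + d = d + 1 by omega] at h)
  -- shift witnesses upwards
  have hshift : ∀ i d j : ℕ, θ (xL ^ i) (xL ^ (i + d)) → i ≤ j →
      θ (xL ^ j) (xL ^ (j + d)) := by
    intro i d j h hij
    have h2 := hmul i (i + d) (j - i) h
    rw [show i + (j - i) = j by omega, show i + d + (j - i) = j + d by omega] at h2
    exact h2
  -- obtain a modulus m ≥ 2 controlling all power identities
  obtain ⟨m, hm2, hmod⟩ :
      ∃ m : ℕ, 2 ≤ m ∧ ∀ i j : ℕ, θ (xL ^ i) (xL ^ j) →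
        i = j ∨ (2 ≤ i ∧ 2 ≤ j ∧ i ≡ j [MOD m]) := by
    by_cases hP : ∃ d : ℕ, 0 < d ∧ ∃ i : ℕ, θ (xL ^ i) (xL ^ (i + d))
    · -- periodic case: take m = minimal positive period
      obtain ⟨g, hgdef⟩ : ∃ g, g = Nat.find hP := ⟨_, rfl⟩
      have hspec := Nat.find_spec hP
      rw [← hgdef] at hspec
      obtain ⟨hgpos, i₀, hgw⟩ := hspec
      have hgmin : ∀ d, d < g → ¬(0 < d ∧ ∃ i : ℕ, θ (xL ^ i) (xL ^ (i + d))) :=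
        fun d hd => Nat.find_min hP (hgdef ▸ hd)
      -- g ≥ 2
      have hg2 : 2 ≤ g := by
        by_contra hg1
        have hgeq : g = 1 := by omega
        subst hgeq
        have h1 := hshift i₀ 1 (i₀ + 1) hgw (by omega)
        exact hAP (i₀ + 1) (by omega) (by rwa [show i₀ + 1 + 1 = i₀ + 1 + 1 from rfl] at h1)
      -- every positive period is divisible by g
      have hdvd : ∀ d : ℕ, 0 < d → (∃ i : ℕ, θ (xL ^ i) (xL ^ (i + d))) → g ∣ d := by
        intro d
        induction d using Nat.strong_induction_on with
        | _ d ih =>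
          intro hdpos ⟨j, hj⟩
          rcases lt_trichotomy d g with h | h | h
          · exact absurd ⟨hdpos, j, hj⟩ (hgmin d h)
          · exact h ▸ dvd_refl g
          · have hk1 : θ (xL ^ (max i₀ j)) (xL ^ (max i₀ j + g)) :=
              hshift i₀ g _ hgw (le_max_left _ _)
            have hk2 : θ (xL ^ (max i₀ j)) (xL ^ (max i₀ j + d)) :=
              hshift j d _ hj (le_max_right _ _)
            have hk3 : θ (xL ^ (max i₀ j + g)) (xL ^ ((max i₀ j + g) + (d - g))) := by
              have := θ.trans (θ.symm hk1) hk2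
              rwa [show max i₀ j + d = (max i₀ j + g) + (d - g) by omega] at this
            have hdg : g ∣ d - g := ih (d - g) (by omega) (by omega) ⟨_, hk3⟩
            have : d - g + g = d := by omega
            exact this ▸ dvd_add hdg dvd_rfl
      refine ⟨g, hg2, ?_⟩
      have haux : ∀ i j : ℕ, i < j → θ (xL ^ i) (xL ^ j) →
          2 ≤ i ∧ 2 ≤ j ∧ i ≡ j [MOD g] := by
        intro i j hij h
        have h' : θ (xL ^ i) (xL ^ (i + (j - i))) := by
          rwa [show i + (j - i) = j by omega]
        have hi2 : 2 ≤ i := hlow i (j - i) (by omega) h'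
        have hd : g ∣ j - i := hdvd (j - i) (by omega) ⟨i, h'⟩
        exact ⟨hi2, by omega, (Nat.modEq_iff_dvd' (by omega)).mpr hd⟩
      intro i j h
      rcases lt_trichotomy i j with hij | hij | hij
      · exact Or.inr (haux i j hij h)
      · exact Or.inl hij
      · obtain ⟨h1, h2, h3⟩ := haux j i hij (θ.symm h)
        exact Or.inr ⟨h2, h1, h3.symm⟩
    · -- trivial case: only trivial power identities
      refine ⟨2, le_refl 2, fun i j h => Or.inl ?_⟩
      by_contra hne
      rcases Nat.lt_or_ge i j with hij | hij
      · exact hP ⟨j - i, by omega, i, by rwa [show i + (j - i) = j by omega]⟩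
      · exact hP ⟨i - j, by omega, j,
          by rw [show j + (i - j) = i by omega]; exact θ.symm h⟩
  haveI : NeZero m := ⟨by omega⟩
  set α : Con FM := ThCon (Multiplicative (ZMod m)) with hα
  set β : Con FM := ThCon M3 with hβ
  -- θ ≤ α
  have hleα : θ ≤ α := by
    rw [Con.le_def]
    intro u v huv φ
    set e : ℕ → ℕ := fun a => (Multiplicative.toAdd (φ (FreeMonoid.of a))).val with he
    have hrep : ∀ a, φ (FreeMonoid.of a) =
        (Multiplicative.ofAdd (1 : ZMod m)) ^ e a := fun a => zmod_rep m _
    rw [eval_pow _ e φ hrep u, eval_pow _ e φ hrep v]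
    have hσ := hθ (FreeMonoid.lift (fun a => xL ^ e a)) u v huv
    rw [lift_pow, lift_pow] at hσ
    rcases hmod _ _ hσ with h | ⟨_, _, h⟩
    · rw [h]
    · rw [g1_pow, g1_pow, (ZMod.natCast_eq_natCast_iff _ _ _).mpr h]
  -- θ ≤ β
  have hleβ : θ ≤ β := by
    rw [Con.le_def]
    intro u v huv φ
    set e : ℕ → ℕ := fun a => (φ (FreeMonoid.of a)).val with he
    have hrep : ∀ a, φ (FreeMonoid.of a) = cM3 ^ e a := fun a => M3_rep _
    rw [eval_pow _ e φ hrep u, eval_pow _ e φ hrep v]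
    have hσ := hθ (FreeMonoid.lift (fun a => xL ^ e a)) u v huv
    rw [lift_pow, lift_pow] at hσ
    rcases hmod _ _ hσ with h | ⟨h1, h2, _⟩
    · rw [h]
    · rw [cM3_pow, cM3_pow]
      apply Fin.ext
      show min _ 2 = min _ 2
      omega
  have hE := hweak α β (ThCon_fi _) (ThCon_fi _) hleα hleβ
  -- (1, xL) is in α∘β∘α
  have hL : Relation.Comp (⇑α) (Relation.Comp (⇑β) (⇑α)) 1 xL := by
    refine ⟨xL ^ m, ?_, xL ^ (m + 1), ?_, ?_⟩
    · intro φ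
      rw [map_one, map_pow, zmod_pow_exp]
    · intro φ
      rw [map_pow, map_pow]
      have hc := M3_rep (φ xL)
      rw [hc, ← pow_mul, ← pow_mul, cM3_pow, cM3_pow]
      apply Fin.ext
      show min _ 2 = min _ 2
      have := (φ xL).isLt
      interval_cases h : (φ xL).val <;> omega
    · intro φ
      rw [map_pow, pow_succ, zmod_pow_exp, one_mul]
  rw [hE] at hL
  obtain ⟨a, hβa, b, hαb, hβb⟩ := hL
  -- from β 1 a we get a = 1
  have ha1 : a = 1 := by
    have h := hβa (FreeMonoid.lift (fun _ => cM3 ^ 1))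
    rw [map_one, lift_pow] at h
    rw [cM3_pow] at h
    have hval : (0 : ℕ) = min ((FreeMonoid.toList a).map (fun _ => 1)).sum 2 :=
      congrArg Fin.val h
    have hsum : ((FreeMonoid.toList a).map (fun _ => (1:ℕ))).sum
        = (FreeMonoid.toList a).length := by simp
    rw [hsum] at hval
    have hlen : (FreeMonoid.toList a).length = 0 := by omega
    have : FreeMonoid.toList a = [] := List.eq_nil_of_length_eq_zero hlen
    calc a = FreeMonoid.ofList (FreeMonoid.toList a) := (FreeMonoid.ofList_toList a).symm
      _ = FreeMonoid.ofList [] := by rw [this]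
      _ = 1 := rfl
  subst ha1
  -- count of letter 0 in b
  set e : ℕ → ℕ := fun n => if n = 0 then 1 else 0 with he
  set t : ℕ := ((FreeMonoid.toList b).map e).sum with ht
  -- α 1 b gives m ∣ t
  have hmt : m ∣ t := by
    have h := hαb (FreeMonoid.lift (fun n => (Multiplicative.ofAdd (1 : ZMod m)) ^ e n))
    rw [map_one, lift_pow] at h
    rw [g1_pow] at h
    have : ((t : ℕ) : ZMod m) = ((0 : ℕ) : ZMod m) := by
      rw [Nat.cast_zero]
      exact (Multiplicative.ofAdd.injective h.symm)
    exact Nat.modEq_zero_iff_dvd.mp ((ZMod.natCast_eq_natCast_iff _ _ _).mp this)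
  -- β b xL gives t = 1
  have ht1 : t = 1 := by
    have h := hβb (FreeMonoid.lift (fun n => cM3 ^ e n))
    rw [lift_pow] at h
    have hx : (FreeMonoid.lift (fun n => cM3 ^ e n)) xL = cM3 ^ 1 := by
      rw [show xL = FreeMonoid.of 0 from rfl, FreeMonoid.lift_eval_of]
      simp [he]
    rw [hx, cM3_pow, cM3_pow] at h
    have hval := congrArg Fin.val h
    simp only at hval
    omega
  rw [ht1] at hmt
  have := Nat.le_of_dvd one_pos hmt
  omega
end
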